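/- Let q > 2 be a natural number. Among all quadruples (a,b,c,d) of integers with 0 ≤ a,b,c,d ≤ 2q−1, the number of quadruples satisfying a − b − c + d ≢ 0 (mod 2q) and ⌊a/2⌋ − ⌊b/2⌋ − ⌊c/2⌋ + ⌊d/2⌋ ≡ 0 (mod q) equals 10q³. Consequently, a uniformly random exponent chain that does not form a cycle for circulant size 2q forms a cycle after floor lifting with probability 5/(4(2q−1)). -/

import Mathlib

/-- The finite set of exponent chains of length 4 for circulant size `2q`:
quadruples `(a,b,c,d)` of integers with `0 ≤ a,b,c,d ≤ 2q-1`. -/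
noncomputable abbrev expChains (q : ℕ) : Finset (ℤ × ℤ × ℤ × ℤ) :=
  Finset.Icc (0:ℤ) (2 * q - 1) ×ˢ Finset.Icc (0:ℤ) (2 * q - 1) ×ˢ
    Finset.Icc (0:ℤ) (2 * q - 1) ×ˢ Finset.Icc (0:ℤ) (2 * q - 1)

/-- The chain forms a cycle for circulant size `2q`. -/
abbrev isCycle (q : ℕ) (x : ℤ × ℤ × ℤ × ℤ) : Prop :=
  (x.1 - x.2.1 - x.2.2.1 + x.2.2.2) % (2 * q) = 0

/-- The floor-lifted chain (entries `⌊e/2⌋`) forms a cycle for circulant size `q`. -/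
abbrev isFloorCycle (q : ℕ) (x : ℤ × ℤ × ℤ × ℤ) : Prop :=
  (x.1 / 2 - x.2.1 / 2 - x.2.2.1 / 2 + x.2.2.2 / 2) % q = 0

lemma aux_dvd_small (b R : ℤ) (hb : 0 < b) (h1 : -b < R) (h2 : R < b) (hd : b ∣ R) : R = 0 := by
  obtain ⟨k, rfl⟩ := hd
  rcases lt_trichotomy k 0 with hk | hk | hk
  · nlinarith
  · simp [hk]
  · nlinarith

lemma countN1 (q : ℕ) (hq : 2 < q) :
    ((expChains q).filter (fun x => ¬ isCycle q x ∧ isFloorCycle q x)).card = 10 * q ^ 3 := by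
  have hq3 : (3:ℤ) ≤ q := by exact_mod_cast hq
  have hn : (0:ℤ) < q := by omega
  have key : ((expChains q).filter (fun x => ¬ isCycle q x ∧ isFloorCycle q x)).card =
      ((Finset.Icc (0:ℤ) (q - 1) ×ˢ Finset.Icc (0:ℤ) (q - 1) ×ˢ Finset.Icc (0:ℤ) (q - 1)) ×ˢ
        ((Finset.Icc (0:ℤ) 1 ×ˢ Finset.Icc (0:ℤ) 1 ×ˢ Finset.Icc (0:ℤ) 1 ×ˢ Finset.Icc (0:ℤ) 1).filter
          fun r => r.1 - r.2.1 - r.2.2.1 + r.2.2.2 ≠ 0)).card := by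
    refine Finset.card_bij'
      (fun x _ => ((x.2.1 / 2, x.2.2.1 / 2, x.2.2.2 / 2), (x.1 % 2, x.2.1 % 2, x.2.2.1 % 2, x.2.2.2 % 2)))
      (fun p _ => (2 * ((p.1.1 + p.1.2.1 - p.1.2.2) % (q:ℤ)) + p.2.1,
                   2 * p.1.1 + p.2.2.1, 2 * p.1.2.1 + p.2.2.2.1, 2 * p.1.2.2 + p.2.2.2.2))
      ?_ ?_ ?_ ?_
    · -- forward maps into target
      rintro ⟨a, b, c, d⟩ hx
      simp only [Finset.mem_filter, Finset.mem_product, Finset.mem_Icc] at hx ⊢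
      obtain ⟨hbnd, hnc, hfc⟩ := hx
      refine ⟨by omega, by omega, ?_⟩
      intro hR0
      apply hnc
      show (a - b - c + d) % (2 * ↑q) = 0
      have hfc' : (a / 2 - b / 2 - c / 2 + d / 2) % (q:ℤ) = 0 := hfc
      obtain ⟨k, hk⟩ := Int.dvd_of_emod_eq_zero hfc'
      have hsplit : a - b - c + d = 2 * (a / 2 - b / 2 - c / 2 + d / 2) +
          (a % 2 - b % 2 - c % 2 + d % 2) := by omega
      rw [hsplit, hR0, hk]
      rw [show 2 * ((q:ℤ) * k) + 0 = 0 + 2 * (q:ℤ) * k by ring]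
      rw [Int.add_mul_emod_self_left]
      simp
    · -- backward maps into source
      rintro ⟨⟨u2, u3, u4⟩, r1, r2, r3, r4⟩ hp
      simp only [Finset.mem_filter, Finset.mem_product, Finset.mem_Icc] at hp ⊢
      obtain ⟨hbnd, hR⟩ := hp
      have hm1 : 0 ≤ (u2 + u3 - u4) % (q:ℤ) := Int.emod_nonneg _ (by omega)
      have hm2 : (u2 + u3 - u4) % (q:ℤ) < q := Int.emod_lt_of_pos _ hn
      set m := (u2 + u3 - u4) % (q:ℤ) with hm
      have hfloor : (2 * m + r1) / 2 = m := by omega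
      have hU : (m - u2 - u3 + u4) % (q:ℤ) = 0 := by
        rw [show m - u2 - u3 + u4 = m - (u2 + u3 - u4) by ring,
          ← Int.emod_eq_emod_iff_emod_sub_eq_zero, hm]
        exact Int.emod_emod_of_dvd _ dvd_rfl
      refine ⟨by omega, ?_, ?_⟩
      · -- not a cycle
        intro hcyc
        have hcyc' : (2 * m + r1 - (2 * u2 + r2) - (2 * u3 + r3) + (2 * u4 + r4)) % (2 * (q:ℤ)) = 0 := hcyc
        obtain ⟨k, hk⟩ := Int.dvd_of_emod_eq_zero hU
        have : (2 * m + r1 - (2 * u2 + r2) - (2 * u3 + r3) + (2 * u4 + r4))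
            = (r1 - r2 - r3 + r4) + (2 * (q:ℤ)) * k := by linear_combination 2 * hk
        rw [this, Int.add_mul_emod_self_left] at hcyc'
        have := aux_dvd_small (2 * (q:ℤ)) (r1 - r2 - r3 + r4) (by omega) (by omega) (by omega)
          (Int.dvd_of_emod_eq_zero hcyc')
        omega
      · -- floor cycle
        show ((2 * m + r1) / 2 - (2 * u2 + r2) / 2 - (2 * u3 + r3) / 2 + (2 * u4 + r4) / 2) % (q:ℤ) = 0
        have e2 : (2 * u2 + r2) / 2 = u2 := by omega
        have e3 : (2 * u3 + r3) / 2 = u3 := by omega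
        have e4 : (2 * u4 + r4) / 2 = u4 := by omega
        rw [hfloor, e2, e3, e4]
        exact hU
    · -- left inverse
      rintro ⟨a, b, c, d⟩ hx
      simp only [Finset.mem_filter, Finset.mem_product, Finset.mem_Icc] at hx
      obtain ⟨hbnd, hnc, hfc⟩ := hx
      have hfc' : (a / 2 - b / 2 - c / 2 + d / 2) % (q:ℤ) = 0 := hfc
      have h1 : (b / 2 + c / 2 - d / 2) % (q:ℤ) = a / 2 := by
        have hXY : (a / 2) % (q:ℤ) = (b / 2 + c / 2 - d / 2) % (q:ℤ) := by
          rw [Int.emod_eq_emod_iff_emod_sub_eq_zero]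
          rw [show a / 2 - (b / 2 + c / 2 - d / 2) = a / 2 - b / 2 - c / 2 + d / 2 by ring]
          exact hfc'
        rw [← hXY, Int.emod_eq_of_lt (by omega) (by omega)]
      simp only [Prod.mk.injEq]
      refine ⟨?_, by omega, by omega, by omega⟩
      rw [h1]; omega
    · -- right inverse
      rintro ⟨⟨u2, u3, u4⟩, r1, r2, r3, r4⟩ hp
      simp only [Finset.mem_filter, Finset.mem_product, Finset.mem_Icc] at hp
      obtain ⟨hbnd, hR⟩ := hp
      have hm1 : 0 ≤ (u2 + u3 - u4) % (q:ℤ) := Int.emod_nonneg _ (by omega)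
      have hm2 : (u2 + u3 - u4) % (q:ℤ) < q := Int.emod_lt_of_pos _ hn
      set m := (u2 + u3 - u4) % (q:ℤ) with hm
      simp only [Prod.mk.injEq]
      refine ⟨⟨by omega, by omega, by omega⟩, by omega, by omega, by omega, by omega⟩
  rw [key]
  rw [Finset.card_product]
  have h10 : ((Finset.Icc (0:ℤ) 1 ×ˢ Finset.Icc (0:ℤ) 1 ×ˢ Finset.Icc (0:ℤ) 1 ×ˢ Finset.Icc (0:ℤ) 1).filter
      fun r => r.1 - r.2.1 - r.2.2.1 + r.2.2.2 ≠ 0).card = 10 := by decide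
  rw [h10]
  simp only [Finset.card_product, Int.card_Icc]
  have : (((q:ℤ) - 1 + 1 - 0).toNat) = q := by omega
  rw [this]; ring

lemma countCycle (q : ℕ) (hq : 0 < q) :
    ((expChains q).filter (fun x => isCycle q x)).card = 8 * q ^ 3 := by
  have hn : (0:ℤ) < 2 * q := by positivity
  have key : ((expChains q).filter (fun x => isCycle q x)).card =
      (Finset.Icc (0:ℤ) (2 * q - 1) ×ˢ Finset.Icc (0:ℤ) (2 * q - 1) ×ˢ
        Finset.Icc (0:ℤ) (2 * q - 1)).card := by
    refine Finset.card_bij' (fun x _ => (x.2.1, x.2.2.1, x.2.2.2))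
      (fun p _ => ((p.1 + p.2.1 - p.2.2) % (2 * ↑q), p.1, p.2.1, p.2.2)) ?_ ?_ ?_ ?_
    · rintro ⟨a, b, c, d⟩ hx
      simp only [Finset.mem_filter, Finset.mem_product, Finset.mem_Icc] at hx ⊢
      tauto
    · rintro ⟨b, c, d⟩ hp
      simp only [Finset.mem_product, Finset.mem_Icc] at hp
      have h1 : 0 ≤ (b + c - d) % (2 * q) := Int.emod_nonneg _ (by omega)
      have h2 : (b + c - d) % (2 * q) < 2 * q := Int.emod_lt_of_pos _ hn
      simp only [Finset.mem_filter, Finset.mem_product, Finset.mem_Icc]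
      refine ⟨⟨by omega, by tauto⟩, ?_⟩
      show ((b + c - d) % (2 * ↑q) - b - c + d) % (2 * ↑q) = 0
      rw [show (b + c - d) % (2 * (q:ℤ)) - b - c + d = (b + c - d) % (2 * (q:ℤ)) - (b + c - d) by ring,
        ← Int.emod_eq_emod_iff_emod_sub_eq_zero]
      exact Int.emod_emod_of_dvd _ dvd_rfl
    · rintro ⟨a, b, c, d⟩ hx
      simp only [Finset.mem_filter, Finset.mem_product, Finset.mem_Icc] at hx
      obtain ⟨⟨ha, hb, hc, hd⟩, hcyc⟩ := hx
      have : (b + c - d) % (2 * q) = a := by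
        have h1 : a % (2 * q) = (b + c - d) % (2 * q) := by
          rw [Int.emod_eq_emod_iff_emod_sub_eq_zero]
          convert hcyc using 2; ring
        rw [← h1, Int.emod_eq_of_lt ha.1 (by omega)]
      simp [this]
    · rintro ⟨b, c, d⟩ _; rfl
  rw [key]
  simp only [Finset.card_product, Int.card_Icc]
  have : ((2 * (q:ℤ) - 1 + 1 - 0).toNat) = 2 * q := by omega
  rw [this]; ring

theorem stmt_1 (q : ℕ) (hq : 2 < q) :
    ((expChains q).filter (fun x => ¬ isCycle q x ∧ isFloorCycle q x)).card = 10 * q ^ 3 ∧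
    (((expChains q).filter (fun x => ¬ isCycle q x ∧ isFloorCycle q x)).card : ℚ) /
      (((expChains q).filter (fun x => ¬ isCycle q x)).card : ℚ) = 5 / (4 * (2 * q - 1)) := by
  have hq0 : 0 < q := by omega
  have hcard : (expChains q).card = 16 * q ^ 4 := by
    simp only [expChains, Finset.card_product, Int.card_Icc]
    have : ((2 * (q:ℤ) - 1 + 1 - 0).toNat) = 2 * q := by omega
    rw [this]; ring
  have hD : ((expChains q).filter (fun x => ¬ isCycle q x)).card = 16 * q ^ 4 - 8 * q ^ 3 := by
    rw [Finset.filter_not, Finset.card_sdiff_of_subset (Finset.filter_subset _ _), hcard,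
      countCycle q hq0]
  refine ⟨countN1 q hq, ?_⟩
  rw [countN1 q hq, hD]
  have hle : 8 * q ^ 3 ≤ 16 * q ^ 4 := by nlinarith
  have hqQ : (3:ℚ) ≤ (q:ℚ) := by exact_mod_cast hq
  rw [Nat.cast_sub hle]
  push_cast
  rw [div_eq_div_iff (by nlinarith [mul_pos (pow_pos (show (0:ℚ) < q by linarith) 3) (show (0:ℚ) < 2*(q:ℚ)-1 by linarith)]) (by nlinarith)]
  ring
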